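/- Let $p_n$ be orthonormal polynomials with recurrence $xp_n = a_{n+1}p_{n+1}+b_np_n+a_np_{n-1}$ and let $p_n^{(1)}$ be the orthonormal associated polynomials of order 1. Then for all $n\ge1$, $\sum_{k=1}^n p_k(x)p_{k-1}^{(1)}(x) = a_{n+1}\left[p_{n+1}'(x)p_{n-1}^{(1)}(x) - p_n'(x)p_n^{(1)}(x)\right]$. -/
import Mathlib


open Polynomial Finset

/-- Christoffel–Darboux type formula mixing orthonormal polynomials with their
associated polynomials of order 1:
`∑_{k=1}^n p_k p_{k-1}^{(1)} = a_{n+1} (p_{n+1}' p_{n-1}^{(1)} - p_n' p_n^{(1)})`. -/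
theorem mixed_christoffel_darboux
    (a b : ℕ → ℝ) (ha : ∀ n, 1 ≤ n → 0 < a n)
    (p q : ℕ → Polynomial ℝ)
    (hp0 : p 0 = 1)
    (hp_init : X * p 0 = C (a 1) * p 1 + C (b 0) * p 0)
    (hp : ∀ n, 1 ≤ n →
      X * p n = C (a (n + 1)) * p (n + 1) + C (b n) * p n + C (a n) * p (n - 1))
    (hq0 : q 0 = 1)
    (hq_init : X * q 0 = C (a 2) * q 1 + C (b 1) * q 0)
    (hq : ∀ n, 1 ≤ n →
      X * q n = C (a (n + 2)) * q (n + 1) + C (b (n + 1)) * q n + C (a (n + 1)) * q (n - 1))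
    (n : ℕ) (hn : 1 ≤ n) :
    ∑ k ∈ Icc 1 n, p k * q (k - 1) =
      C (a (n + 1)) * (derivative (p (n + 1)) * q (n - 1) - derivative (p n) * q n) := by
  induction n, hn using Nat.le_induction with
  | base =>
    have h1 := hp 1 le_rfl
    rw [hp0] at h1
    have d1 := congrArg derivative h1
    simp only [derivative_add, derivative_mul, derivative_X, derivative_C, derivative_one, one_mul, zero_mul,
      mul_zero, mul_one, add_zero, zero_add] at d1
    rw [hq0, mul_one] at hq_init
    simp only [Icc_self, sum_singleton]
    rw [hq0]
    linear_combination d1 - derivative (p 1) * hq_init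
  | succ n hn ih =>
    rw [Finset.sum_Icc_succ_top (by omega : 1 ≤ n + 1), ih]
    have h2 := hp (n + 1) (by omega)
    simp only [Nat.add_sub_cancel] at h2
    have d2 := congrArg derivative h2
    simp only [derivative_add, derivative_mul, derivative_X, derivative_C, one_mul, zero_mul, zero_add] at d2
    have h3 := hq n hn
    simp only [Nat.add_sub_cancel]
    linear_combination q n * d2 - derivative (p (n + 1)) * h3
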